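/- Let T, b2 ∈ ℝ. Then: (i) for every x ∈ ℝ, x·(T + b2·(x² − 1)) + (1 − x)·(T + b2·(x² + x)) = T; (ii) (∫₀¹ x·(T + b2·(x² − 1)) dx)/(∫₀¹ x dx) = T − b2/2, where the integrals are Lebesgue integrals over the unit interval; and (iii) for T = b2 = 1/3, the value T − b2/2 = 1/6 does not belong to the interval [T − (1/3)·min{T, 1 − T}, T + (1/3)·min{T, 1 − T}] = [2/9, 4/9]. -/

import Mathlib

theorem stmt_18 (T b2 : ℝ) :
    (∀ x : ℝ, x * (T + b2 * (x ^ 2 - 1)) + (1 - x) * (T + b2 * (x ^ 2 + x)) = T) ∧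
    (∫ x in (0:ℝ)..1, x * (T + b2 * (x ^ 2 - 1))) / (∫ x in (0:ℝ)..1, x)
      = T - b2 / 2 ∧
    (T = 1 / 3 → b2 = 1 / 3 →
      T - b2 / 2 = 1 / 6 ∧
      Set.Icc (T - (1 / 3) * min T (1 - T)) (T + (1 / 3) * min T (1 - T))
        = Set.Icc (2 / 9 : ℝ) (4 / 9) ∧
      T - b2 / 2 ∉ Set.Icc (T - (1 / 3) * min T (1 - T)) (T + (1 / 3) * min T (1 - T))) := by
  refine ⟨fun x => by ring, ?_, ?_⟩
  · have h1 : (∫ x in (0:ℝ)..1, x * (T + b2 * (x ^ 2 - 1)))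
        = T / 2 - b2 / 4 := by
      have : ∀ x : ℝ, x * (T + b2 * (x ^ 2 - 1)) = b2 * x ^ 3 + (T - b2) * x := by
        intro x; ring
      simp_rw [this]
      rw [intervalIntegral.integral_add
        ((by exact continuous_const.mul (continuous_pow 3) : Continuous fun x:ℝ => b2 * x ^ 3).intervalIntegrable 0 1)
        (Continuous.intervalIntegrable (by continuity : Continuous fun x:ℝ => (T-b2)*x) 0 1),
        intervalIntegral.integral_const_mul, intervalIntegral.integral_const_mul,
        integral_pow, integral_id]
      norm_num; ring
    rw [h1, integral_id]
    norm_num; ring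
  · rintro rfl rfl
    norm_num
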